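/- The strategy induced by an affine-stable map satisfies receptivity and innocence: with F := { x ∥ y : y ⊑_B f(x) } the stable family of an affine-stable map f from A to B, the map max : Pr(F) → A⊥ ∥ B is a strategy; i.e. it is receptive (any extension of the image by Opponent moves lifts uniquely) and innocent (the only immediate causal dependencies added beyond those of A⊥ ∥ B have an Opponent move preceding a Player move). -/

import Mathlib

universe u v w

/-- An event structure `(E, ≤, Con)`. -/
structure ES (E : Type u) where
  le : E → E → Prop
  le_refl : ∀ e, le e e
  le_trans : ∀ {a b c}, le a b → le b c → le a c
  le_antisymm : ∀ {a b}, le a b → le b a → a = b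
  finitary : ∀ e, Set.Finite {e' | le e' e}
  Con : Set E → Prop
  con_finite : ∀ {X}, Con X → X.Finite
  con_empty : Con ∅
  con_singleton : ∀ e, Con {e}
  con_mono : ∀ {X Y : Set E}, Y ⊆ X → Con X → Con Y
  con_extend : ∀ {X : Set E} {e e'}, Con X → le e e' → e' ∈ X → Con (insert e X)

namespace ES

variable {E : Type u}

/-- A configuration: consistent and down-closed. -/
def Config (S : ES E) (x : Set E) : Prop :=
  (∀ X : Set E, X ⊆ x → X.Finite → S.Con X) ∧
  ∀ ⦃e e' : E⦄, S.le e' e → e ∈ x → e' ∈ x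

/-- The down-closure `[e]` of an event. -/
def downCl (S : ES E) (e : E) : Set E := {e' | S.le e' e}

/-- The concurrency relation. -/
def Co (S : ES E) (e e' : E) : Prop :=
  S.Con {e, e'} ∧ ¬ S.le e e' ∧ ¬ S.le e' e

end ES

/-- The covering (immediate dependency) relation of an order. -/
def Covers {α : Type u} (le : α → α → Prop) (a b : α) : Prop :=
  a ≠ b ∧ le a b ∧ ∀ c, le a c → le c b → c = a ∨ c = b

/-- An event structure with polarity (`true` = Player `+`, `false` = Opponent `−`). -/
structure Game (E : Type u) extends ES E where
  pol : E → Bool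

namespace Game

variable {E : Type u} {E' : Type v}

def Config (G : Game E) : Set E → Prop := G.toES.Config

/-- The dual game: polarities reversed. -/
def dual (G : Game E) : Game E := { toES := G.toES, pol := fun e => !G.pol e }

/-- The Scott order: `y ⊑ x` iff `y⁻ ⊇ x⁻` and `y⁺ ⊆ x⁺`. -/
def ScottLE (G : Game E) (y x : Set E) : Prop :=
  {e | e ∈ x ∧ G.pol e = false} ⊆ {e | e ∈ y ∧ G.pol e = false} ∧
  {e | e ∈ y ∧ G.pol e = true} ⊆ {e | e ∈ x ∧ G.pol e = true}

/-- `x ⊆⁻ y` : inclusion with only Opponent events intervening. -/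
def subNeg (G : Game E) (x y : Set E) : Prop :=
  x ⊆ y ∧ ∀ e ∈ y, e ∉ x → G.pol e = false

/-- `x ⊆⁺ y` : inclusion with only Player events intervening. -/
def subPos (G : Game E) (x y : Set E) : Prop :=
  x ⊆ y ∧ ∀ e ∈ y, e ∉ x → G.pol e = true

/-- Race-freeness of a game. -/
def RaceFree (G : Game E) : Prop :=
  ∀ x y z, G.Config x → G.Config y → G.Config z →
    G.subNeg x y → G.subPos x z → G.Config (y ∪ z)

end Game

section StableFamilies

variable {E : Type u}

/-- A subset of a family is compatible when some member of the family bounds it. -/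
def FamCompatible (F : Set (Set E)) (Z : Set (Set E)) : Prop :=
  ∃ u ∈ F, ∀ z ∈ Z, z ⊆ u

/-- Stable families: complete, stable, finitary and coincidence-free. -/
def IsStableFamily (F : Set (Set E)) : Prop :=
  F.Nonempty ∧
  (∀ Z ⊆ F, (∀ W ⊆ Z, W.Finite → FamCompatible F W) → ⋃₀ Z ∈ F) ∧
  (∀ Z ⊆ F, Z.Nonempty → FamCompatible F Z → ⋂₀ Z ∈ F) ∧
  (∀ x ∈ F, ∀ e ∈ x, ∃ x₀ ∈ F, x₀.Finite ∧ e ∈ x₀ ∧ x₀ ⊆ x) ∧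
  (∀ x ∈ F, ∀ e ∈ x, ∀ e' ∈ x, e ≠ e' →
    ∃ x₀ ∈ F, x₀ ⊆ x ∧ (e ∈ x₀ ↔ e' ∉ x₀))

/-- The prime configuration `[e]_x` of `e` in `x`. -/
def primeConfig (F : Set (Set E)) (e : E) (x : Set E) : Set E :=
  ⋂₀ {y | y ∈ F ∧ e ∈ y ∧ y ⊆ x}

/-- The primes of a family. -/
def IsPrime (F : Set (Set E)) (p : Set E) : Prop :=
  ∃ e x, x ∈ F ∧ e ∈ x ∧ p = primeConfig F e x

end StableFamilies

section Par

variable {E : Type u} {E' : Type v}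

/-- Configurations of a parallel composition `A ∥ B` (componentwise). -/
def parConfig (A : Game E) (B : Game E') (w : Set (E ⊕ E')) : Prop :=
  A.Config (Sum.inl ⁻¹' w) ∧ B.Config (Sum.inr ⁻¹' w)

/-- Causal dependency of `A ∥ B` (componentwise). -/
def parLE (A : Game E) (B : Game E') : (E ⊕ E') → (E ⊕ E') → Prop :=
  Sum.LiftRel A.le B.le

/-- Polarity of `A⊥ ∥ B`. -/
def parPolL (A : Game E) (B : Game E') : E ⊕ E' → Bool
  | .inl a => !A.pol a
  | .inr b => B.pol b

end Par


section AffineStable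

variable {E : Type u} {E' : Type v} {E'' : Type w}

/-- Affine-stable maps between games. -/
def IsAffineStable (A : Game E) (B : Game E') (f : Set E → Set E') : Prop :=
  (∀ x, A.Config x → B.Config (f x)) ∧
  (∀ x y, A.Config x → A.Config y → A.subNeg x y → B.subNeg (f x) (f y)) ∧
  (∀ x y, A.Config x → A.Config y → A.subPos x y → B.subPos (f x) (f y)) ∧
  (∀ x, A.Config x → ∀ b ∈ f x, B.pol b = true →
    ∃ x₀, A.Config x₀ ∧ x₀.Finite ∧ x₀ ⊆ x ∧ b ∈ f x₀) ∧
  (∀ x, A.Config x → x.Finite → {b | b ∈ f x ∧ B.pol b = false}.Finite) ∧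
  (∀ I : Set (Set E), (∀ x ∈ I, A.Config x) →
    (∃ u, A.Config u ∧ ∀ x ∈ I, x ⊆ u) →
    B.subPos (⋃₀ (f '' I)) (f (⋃₀ I))) ∧
  (∀ I : Set (Set E), I.Nonempty → (∀ x ∈ I, A.Config x) →
    (∃ u, A.Config u ∧ ∀ x ∈ I, x ⊆ u) →
    B.subNeg (f (⋂₀ I)) (⋂₀ (f '' I)))

/-- The stable family `{ x ∥ y : y ⊑_B f(x) }` of an affine-stable map. -/
def affFamily (A : Game E) (B : Game E') (f : Set E → Set E') :
    Set (Set (E ⊕ E')) :=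
  {w | ∃ x y, A.Config x ∧ B.Config y ∧ B.ScottLE y (f x) ∧
    w = Sum.inl '' x ∪ Sum.inr '' y}

end AffineStable

section Primes

variable {X : Type u}

/-- Configurations of the event structure of primes `Pr(F)`. -/
def PrConfig (F : Set (Set X)) (y : Set {p : Set X // IsPrime F p}) : Prop :=
  (∀ p ∈ y, ∀ q : {p : Set X // IsPrime F p}, q.1 ⊆ p.1 → q ∈ y) ∧
  (∀ Z ⊆ y, Z.Finite → ⋃₀ (Subtype.val '' Z) ∈ F)

/-- Consistency in `Pr(F)`. -/
def PrCon (F : Set (Set X)) (Z : Set {p : Set X // IsPrime F p}) : Prop :=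
  Z.Finite ∧ ⋃₀ (Subtype.val '' Z) ∈ F

end Primes

section AuxES

variable {E : Type u}

lemma ES.config_of (S : ES E) {x : Set E}
    (hdown : ∀ ⦃e e' : E⦄, S.le e' e → e ∈ x → e' ∈ x)
    (hb : ∀ X : Set E, X ⊆ x → X.Finite → ∃ c, S.Config c ∧ X ⊆ c) : S.Config x := by
  refine ⟨fun X hX hXf => ?_, hdown⟩
  obtain ⟨c, hc, hXc⟩ := hb X hX hXf
  exact hc.1 X hXc hXf

lemma ES.config_subset (S : ES E) {u x : Set E} (hu : S.Config u) (hxu : x ⊆ u)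
    (hdown : ∀ ⦃e e' : E⦄, S.le e' e → e ∈ x → e' ∈ x) : S.Config x :=
  ⟨fun X hX hXf => hu.1 X (hX.trans hxu) hXf, hdown⟩

lemma ES.config_empty (S : ES E) : S.Config (∅ : Set E) :=
  ⟨fun X hX _ => by
    have : X = ∅ := Set.subset_empty_iff.mp hX
    simpa [this] using S.con_empty, fun _ _ _ h => h.elim⟩

lemma ES.config_sInter (S : ES E) {Z : Set (Set E)} (hne : Z.Nonempty)
    (h : ∀ z ∈ Z, S.Config z) : S.Config (⋂₀ Z) := by
  obtain ⟨z₀, hz₀⟩ := hne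
  refine S.config_subset (h z₀ hz₀) (Set.sInter_subset_of_mem hz₀) ?_
  intro e e' hle he
  exact fun z hz => (h z hz).2 hle (he z hz)

lemma ES.config_inter (S : ES E) {x y : Set E} (hx : S.Config x) (hy : S.Config y) :
    S.Config (x ∩ y) :=
  S.config_subset hx Set.inter_subset_left
    (fun e e' hle he => ⟨hx.2 hle he.1, hy.2 hle he.2⟩)

lemma ES.config_downCl (S : ES E) {x : Set E} {e : E} (hx : S.Config x) (he : e ∈ x) :
    S.Config (S.downCl e) := by
  refine S.config_subset hx (fun c hc => hx.2 hc he) ?_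
  intro a a' hle ha
  exact S.le_trans hle ha

lemma ES.exists_maximal (S : ES E) {x : Set E} (hfin : x.Finite) (hne : x.Nonempty) :
    ∃ a ∈ x, ∀ c ∈ x, S.le a c → c = a := by
  obtain ⟨a, ha, hmax⟩ :=
    Set.Finite.exists_maximalFor (fun a => (x ∩ S.downCl a).ncard) x hfin hne
  refine ⟨a, ha, fun c hc hle => ?_⟩
  by_contra hca
  have hsub : x ∩ S.downCl a ⊂ x ∩ S.downCl c := by
    constructor
    · rintro t ⟨ht, hta⟩
      exact ⟨ht, S.le_trans hta hle⟩
    · intro hcon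
      have : c ∈ x ∩ S.downCl a := hcon ⟨hc, S.le_refl c⟩
      exact hca (S.le_antisymm this.2 hle)
  have hlt : (x ∩ S.downCl a).ncard < (x ∩ S.downCl c).ncard :=
    Set.ncard_lt_ncard hsub (hfin.subset Set.inter_subset_left)
  have : (x ∩ S.downCl c).ncard ≤ (x ∩ S.downCl a).ncard := hmax hc (le_of_lt hlt)
  omega

end AuxES

section AuxSum

variable {E : Type u} {E' : Type v}

/-- Left component of a set of `E ⊕ E'`. -/
def auxL (w : Set (E ⊕ E')) : Set E := Sum.inl ⁻¹' w

/-- Right component of a set of `E ⊕ E'`. -/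
def auxR (w : Set (E ⊕ E')) : Set E' := Sum.inr ⁻¹' w

/-- Build a set of `E ⊕ E'` from components. -/
def auxMk (x : Set E) (y : Set E') : Set (E ⊕ E') := Sum.inl '' x ∪ Sum.inr '' y

@[simp] lemma auxL_mk (x : Set E) (y : Set E') : auxL (auxMk x y) = x := by
  ext a; simp [auxL, auxMk]

@[simp] lemma auxR_mk (x : Set E) (y : Set E') : auxR (auxMk x y) = y := by
  ext b; simp [auxR, auxMk]

lemma auxMk_LR (w : Set (E ⊕ E')) : auxMk (auxL w) (auxR w) = w := by
  ext t; cases t <;> simp [auxL, auxR, auxMk]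

@[simp] lemma mem_auxL {w : Set (E ⊕ E')} {a : E} : a ∈ auxL w ↔ Sum.inl a ∈ w := Iff.rfl

@[simp] lemma mem_auxR {w : Set (E ⊕ E')} {b : E'} : b ∈ auxR w ↔ Sum.inr b ∈ w := Iff.rfl

@[simp] lemma inl_mem_auxMk {x : Set E} {y : Set E'} {a : E} :
    Sum.inl a ∈ auxMk x y ↔ a ∈ x := by simp [auxMk]

@[simp] lemma inr_mem_auxMk {x : Set E} {y : Set E'} {b : E'} :
    Sum.inr b ∈ auxMk x y ↔ b ∈ y := by simp [auxMk]

lemma auxMk_subset {x : Set E} {y : Set E'} {w : Set (E ⊕ E')}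
    (hx : x ⊆ auxL w) (hy : y ⊆ auxR w) : auxMk x y ⊆ w := by
  rintro t (⟨a, ha, rfl⟩ | ⟨b, hb, rfl⟩)
  · exact hx ha
  · exact hy hb

lemma auxL_mono {w w' : Set (E ⊕ E')} (h : w ⊆ w') : auxL w ⊆ auxL w' :=
  fun _ ha => h ha

lemma auxR_mono {w w' : Set (E ⊕ E')} (h : w ⊆ w') : auxR w ⊆ auxR w' :=
  fun _ hb => h hb

end AuxSum
section AuxFam

variable {E : Type u} {E' : Type v} {A : Game E} {B : Game E'} {f : Set E → Set E'}

lemma auxScott_intro {y x : Set E'}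
    (h1 : ∀ b ∈ x, B.pol b = false → b ∈ y)
    (h2 : ∀ b ∈ y, B.pol b = true → b ∈ x) : B.ScottLE y x := by
  constructor
  · rintro b ⟨hb, hp⟩; exact ⟨h1 b hb hp, hp⟩
  · rintro b ⟨hb, hp⟩; exact ⟨h2 b hb hp, hp⟩

lemma auxScott_neg {y x : Set E'} (h : B.ScottLE y x) :
    ∀ b ∈ x, B.pol b = false → b ∈ y := fun b hb hp => (h.1 ⟨hb, hp⟩).1

lemma auxScott_pos {y x : Set E'} (h : B.ScottLE y x) :
    ∀ b ∈ y, B.pol b = true → b ∈ x := fun b hb hp => (h.2 ⟨hb, hp⟩).1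

lemma aux_mem_iff {w : Set (E ⊕ E')} :
    w ∈ affFamily A B f ↔
      A.Config (auxL w) ∧ B.Config (auxR w) ∧ B.ScottLE (auxR w) (f (auxL w)) := by
  constructor
  · rintro ⟨x, y, hx, hy, hs, rfl⟩
    have hL : auxL (Sum.inl '' x ∪ Sum.inr '' y) = x := auxL_mk x y
    have hR : auxR (Sum.inl '' x ∪ Sum.inr '' y) = y := auxR_mk x y
    rw [show Sum.inl '' x ∪ Sum.inr '' y = auxMk x y from rfl, auxL_mk, auxR_mk]
    exact ⟨hx, hy, hs⟩
  · rintro ⟨h1, h2, h3⟩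
    exact ⟨auxL w, auxR w, h1, h2, h3, (auxMk_LR w).symm⟩

lemma aux_mem_mk {x : Set E} {y : Set E'} (hx : A.Config x) (hy : B.Config y)
    (h1 : ∀ b ∈ f x, B.pol b = false → b ∈ y)
    (h2 : ∀ b ∈ y, B.pol b = true → b ∈ f x) : auxMk x y ∈ affFamily A B f :=
  ⟨x, y, hx, hy, auxScott_intro h1 h2, rfl⟩

lemma aux_f_config (hf : IsAffineStable A B f) {x : Set E} (hx : A.Config x) :
    B.Config (f x) := hf.1 x hx

lemma aux_f_mono (hf : IsAffineStable A B f) {x x' : Set E} (hx : A.Config x)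
    (hx' : A.Config x') (hss : x ⊆ x') : f x ⊆ f x' := by
  have h7 := hf.2.2.2.2.2.2 {x, x'} ⟨x, by simp⟩
    (by rintro z (rfl | rfl); exacts [hx, hx'])
    ⟨x', hx', by rintro z (rfl | rfl); exacts [hss, subset_rfl]⟩
  have h1 : ⋂₀ {x, x'} = x := by
    rw [Set.sInter_pair]; exact Set.inter_eq_left.mpr hss
  rw [h1] at h7
  intro b hb
  have hb2 : b ∈ ⋂₀ (f '' {x, x'}) := h7.1 hb
  have : f x' ∈ f '' {x, x'} := ⟨x', by simp, rfl⟩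
  exact hb2 _ this

lemma aux_f_empty_pos (hf : IsAffineStable A B f) :
    ∀ b ∈ f (∅ : Set E), B.pol b = true := by
  have h6 := hf.2.2.2.2.2.1 (∅ : Set (Set E)) (by simp)
    ⟨∅, A.toES.config_empty, by simp⟩
  intro b hb
  have : ⋃₀ (f '' (∅ : Set (Set E))) = (∅ : Set E') := by simp
  rw [show ⋃₀ (∅ : Set (Set E)) = (∅ : Set E) from by simp] at h6
  exact h6.2 b hb (by rw [this]; exact Set.notMem_empty b)

lemma aux_sUnion_mem (hf : IsAffineStable A B f) {Z : Set (Set (E ⊕ E'))}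
    (hZ : Z ⊆ affFamily A B f)
    (hcomp : ∀ W ⊆ Z, W.Finite → FamCompatible (affFamily A B f) W) :
    ⋃₀ Z ∈ affFamily A B f := by
  classical
  -- a bound for finitely many events of the union
  have hbnd : ∀ T : Set (E ⊕ E'), T.Finite → (∀ t ∈ T, ∃ w ∈ Z, t ∈ w) →
      ∃ u ∈ affFamily A B f, T ⊆ u := by
    intro T hT hmem
    set g : E ⊕ E' → Set (E ⊕ E') :=
      fun t => if h : ∃ w ∈ Z, t ∈ w then h.choose else ∅ with hg
    have hgZ : ∀ t ∈ T, g t ∈ Z ∧ t ∈ g t := by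
      intro t ht
      have h := hmem t ht
      simp only [hg, dif_pos h]
      exact ⟨h.choose_spec.1, h.choose_spec.2⟩
    obtain ⟨u, hu, hub⟩ := hcomp (g '' T)
      (by rintro _ ⟨t, ht, rfl⟩; exact (hgZ t ht).1) (hT.image g)
    exact ⟨u, hu, fun t ht => hub (g t) ⟨t, ht, rfl⟩ (hgZ t ht).2⟩
  have hXdown : ∀ ⦃a c : E⦄, A.le c a → a ∈ auxL (⋃₀ Z) → c ∈ auxL (⋃₀ Z) := by
    rintro a c hle ⟨w, hw, haw⟩
    exact ⟨w, hw, ((aux_mem_iff.mp (hZ hw)).1).2 hle haw⟩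
  have hX : A.Config (auxL (⋃₀ Z)) := by
    refine A.toES.config_of hXdown ?_
    intro X hXs hXf
    obtain ⟨u, hu, hub⟩ := hbnd (Sum.inl '' X) (hXf.image _)
      (by rintro _ ⟨a, ha, rfl⟩; exact hXs ha)
    exact ⟨auxL u, (aux_mem_iff.mp hu).1, fun a ha => hub ⟨a, ha, rfl⟩⟩
  have hYdown : ∀ ⦃b c : E'⦄, B.le c b → b ∈ auxR (⋃₀ Z) → c ∈ auxR (⋃₀ Z) := by
    rintro b c hle ⟨w, hw, hbw⟩
    exact ⟨w, hw, ((aux_mem_iff.mp (hZ hw)).2.1).2 hle hbw⟩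
  have hY : B.Config (auxR (⋃₀ Z)) := by
    refine B.toES.config_of hYdown ?_
    intro X hXs hXf
    obtain ⟨u, hu, hub⟩ := hbnd (Sum.inr '' X) (hXf.image _)
      (by rintro _ ⟨b, hb, rfl⟩; exact hXs hb)
    exact ⟨auxR u, (aux_mem_iff.mp hu).2.1, fun b hb => hub ⟨b, hb, rfl⟩⟩
  -- image family
  have hIconf : ∀ x ∈ auxL '' Z, A.Config x := by
    rintro _ ⟨w, hw, rfl⟩; exact (aux_mem_iff.mp (hZ hw)).1
  have hIU : ⋃₀ (auxL '' Z) = auxL (⋃₀ Z) := by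
    ext a
    constructor
    · rintro ⟨_, ⟨w, hw, rfl⟩, haw⟩; exact ⟨w, hw, haw⟩
    · rintro ⟨w, hw, haw⟩; exact ⟨auxL w, ⟨w, hw, rfl⟩, haw⟩
  have h6 := hf.2.2.2.2.2.1 (auxL '' Z) hIconf
    ⟨auxL (⋃₀ Z), hX, by rintro _ ⟨w, hw, rfl⟩; exact auxL_mono (Set.subset_sUnion_of_mem hw)⟩
  rw [hIU] at h6
  refine aux_mem_iff.mpr ⟨hX, hY, auxScott_intro ?_ ?_⟩
  · -- negatives of f (auxL ⋃₀Z) are present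
    intro b hb hpol
    by_cases hmem : b ∈ ⋃₀ (f '' (auxL '' Z))
    · obtain ⟨_, ⟨_, ⟨w, hw, rfl⟩, rfl⟩, hbw⟩ := hmem
      have hsc := (aux_mem_iff.mp (hZ hw)).2.2
      exact auxR_mono (Set.subset_sUnion_of_mem hw) (auxScott_neg hsc b hbw hpol)
    · have := h6.2 b hb hmem
      rw [this] at hpol; exact absurd hpol (by simp)
  · intro b hb hpol
    obtain ⟨w, hw, hbw⟩ := hb
    have hsc := (aux_mem_iff.mp (hZ hw)).2.2
    have : b ∈ f (auxL w) := auxScott_pos hsc b hbw hpol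
    exact h6.1 ⟨f (auxL w), ⟨auxL w, ⟨w, hw, rfl⟩, rfl⟩, this⟩

lemma aux_sInter_mem (hf : IsAffineStable A B f) {Z : Set (Set (E ⊕ E'))}
    (hZ : Z ⊆ affFamily A B f) (hne : Z.Nonempty) {u : Set (E ⊕ E')}
    (hu : u ∈ affFamily A B f) (hub : ∀ w ∈ Z, w ⊆ u) :
    ⋂₀ Z ∈ affFamily A B f := by
  obtain ⟨w₀, hw₀⟩ := hne
  have hLint : ∀ w ∈ Z, auxL (⋂₀ Z) ⊆ auxL w := fun w hw =>
    auxL_mono (Set.sInter_subset_of_mem hw)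
  have hX : A.Config (auxL (⋂₀ Z)) := by
    refine A.toES.config_subset (aux_mem_iff.mp (hZ hw₀)).1 (hLint w₀ hw₀) ?_
    intro a c hle ha
    intro w hw
    exact ((aux_mem_iff.mp (hZ hw)).1).2 hle (ha w hw)
  have hY : B.Config (auxR (⋂₀ Z)) := by
    refine B.toES.config_subset (aux_mem_iff.mp (hZ hw₀)).2.1
      (auxR_mono (Set.sInter_subset_of_mem hw₀)) ?_
    intro b c hle hb
    intro w hw
    exact ((aux_mem_iff.mp (hZ hw)).2.1).2 hle (hb w hw)
  have hIint : ⋂₀ (auxL '' Z) = auxL (⋂₀ Z) := by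
    ext a
    constructor
    · intro h w hw
      exact h (auxL w) ⟨w, hw, rfl⟩
    · rintro h _ ⟨w, hw, rfl⟩
      exact h w hw
  have h7 := hf.2.2.2.2.2.2 (auxL '' Z) (⟨auxL w₀, w₀, hw₀, rfl⟩)
    (by rintro _ ⟨w, hw, rfl⟩; exact (aux_mem_iff.mp (hZ hw)).1)
    ⟨auxL u, (aux_mem_iff.mp hu).1, by rintro _ ⟨w, hw, rfl⟩; exact auxL_mono (hub w hw)⟩
  rw [hIint] at h7
  refine aux_mem_iff.mpr ⟨hX, hY, auxScott_intro ?_ ?_⟩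
  · intro b hb hpol
    intro w hw
    have hconf := aux_mem_iff.mp (hZ hw)
    have : b ∈ f (auxL w) :=
      aux_f_mono hf hX hconf.1 (hLint w hw) hb
    exact auxScott_neg hconf.2.2 b this hpol
  · intro b hb hpol
    have hmem : b ∈ ⋂₀ (f '' (auxL '' Z)) := by
      rintro _ ⟨_, ⟨w, hw, rfl⟩, rfl⟩
      have hconf := aux_mem_iff.mp (hZ hw)
      exact auxScott_pos hconf.2.2 b (hb w hw) hpol
    by_cases hbi : b ∈ f (auxL (⋂₀ Z))
    · exact hbi
    · have := h7.2 b hmem hbi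
      rw [this] at hpol; exact absurd hpol (by simp)

end AuxFam
section AuxPrime

variable {E : Type u} {E' : Type v} {A : Game E} {B : Game E'} {f : Set E → Set E'}

lemma aux_primeConfig_subset {F : Set (Set (E ⊕ E'))} {e : E ⊕ E'} {x w : Set (E ⊕ E')}
    (hw : w ∈ F) (hew : e ∈ w) (hwx : w ⊆ x) : primeConfig F e x ⊆ w :=
  Set.sInter_subset_of_mem ⟨hw, hew, hwx⟩

lemma aux_mem_primeConfig {F : Set (Set (E ⊕ E'))} {e : E ⊕ E'} {x : Set (E ⊕ E')} :
    e ∈ primeConfig F e x := fun _ hz => hz.2.1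

lemma aux_primeConfig_mem (hf : IsAffineStable A B f) {e : E ⊕ E'} {x : Set (E ⊕ E')}
    (hx : x ∈ affFamily A B f) (he : e ∈ x) :
    primeConfig (affFamily A B f) e x ∈ affFamily A B f := by
  refine aux_sInter_mem hf (fun z hz => hz.1) ⟨x, hx, he, subset_rfl⟩ hx
    (fun w hw => hw.2.2)

lemma aux_primeConfig_base {F : Set (Set (E ⊕ E'))} {e : E ⊕ E'} {x : Set (E ⊕ E')}
    (hx : x ∈ F) (he : e ∈ x) : primeConfig F e x ⊆ x :=
  aux_primeConfig_subset hx he subset_rfl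

/-- if `p` has top `e` then `p` is below any member of the family containing `e` inside `p` -/
lemma aux_prime_min {F : Set (Set (E ⊕ E'))} {p w : Set (E ⊕ E')} {e : E ⊕ E'}
    (hp : p = primeConfig F e p) (hw : w ∈ F) (hew : e ∈ w) (hwp : w ⊆ p) : p ⊆ w := by
  rw [hp]; exact aux_primeConfig_subset hw hew hwp

lemma aux_primeConfig_idem (hf : IsAffineStable A B f) {e : E ⊕ E'} {x : Set (E ⊕ E')}
    (hx : x ∈ affFamily A B f) (he : e ∈ x) :
    primeConfig (affFamily A B f) e (primeConfig (affFamily A B f) e x)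
      = primeConfig (affFamily A B f) e x := by
  apply Set.Subset.antisymm
  · exact aux_primeConfig_subset (aux_primeConfig_mem hf hx he) aux_mem_primeConfig
      subset_rfl
  · apply Set.sInter_subset_sInter
    rintro z ⟨hz1, hz2, hz3⟩
    exact ⟨hz1, hz2, hz3.trans (aux_primeConfig_base hx he)⟩

lemma aux_prime_memF (hf : IsAffineStable A B f) {p : Set (E ⊕ E')}
    (hp : IsPrime (affFamily A B f) p) : p ∈ affFamily A B f := by
  obtain ⟨e, x, hx, he, rfl⟩ := hp
  exact aux_primeConfig_mem hf hx he

/-- primes with top `e` contained in a member `w` equal `primeConfig F e w` -/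
lemma aux_top_ext (hf : IsAffineStable A B f) {p w : Set (E ⊕ E')} {e : E ⊕ E'}
    (hw : w ∈ affFamily A B f) (hpF : p ∈ affFamily A B f)
    (htop : e ∈ p ∧ p = primeConfig (affFamily A B f) e p) (hpw : p ⊆ w) :
    p = primeConfig (affFamily A B f) e w := by
  apply Set.Subset.antisymm
  · intro t ht
    intro z hz
    obtain ⟨hz1, hz2, hz3⟩ := hz
    have hint : z ∩ p ∈ affFamily A B f := by
      have := aux_sInter_mem hf (Z := {z, p})
        (by rintro u (rfl | rfl); exacts [hz1, hpF])
        ⟨z, by simp⟩ hw (by rintro u (rfl | rfl); exacts [hz3, hpw])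
      rwa [Set.sInter_pair] at this
    have : p ⊆ z ∩ p :=
      aux_prime_min htop.2 hint ⟨hz2, htop.1⟩ Set.inter_subset_right
    exact (this ht).1
  · exact aux_primeConfig_subset hpF htop.1 hpw

end AuxPrime
section AuxTop

variable {E : Type u} {E' : Type v}

/-- member of the family built from a sub-input `x₀` and the events of `auxR p` forced
by negatives of `f x₀` or lying below `s`. -/
def auxMD (B : Game E') (f : Set E → Set E') (p : Set (E ⊕ E')) (x₀ : Set E)
    (s : Set E') : Set (E ⊕ E') :=
  auxMk x₀ {c | c ∈ auxR p ∧ ∃ d, ((d ∈ f x₀ ∧ B.pol d = false) ∨ d ∈ s) ∧ B.le c d}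

variable {A : Game E} {B : Game E'} {f : Set E → Set E'}

@[simp] lemma inl_mem_auxMD {p : Set (E ⊕ E')} {x₀ : Set E} {s : Set E'} {a : E} :
    Sum.inl a ∈ auxMD B f p x₀ s ↔ a ∈ x₀ := by simp [auxMD]

@[simp] lemma inr_mem_auxMD {p : Set (E ⊕ E')} {x₀ : Set E} {s : Set E'} {c : E'} :
    Sum.inr c ∈ auxMD B f p x₀ s ↔
      c ∈ auxR p ∧ ∃ d, ((d ∈ f x₀ ∧ B.pol d = false) ∨ d ∈ s) ∧ B.le c d := by
  simp only [auxMD, inr_mem_auxMk, Set.mem_setOf_eq]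

lemma auxMD_mem (hf : IsAffineStable A B f) {p : Set (E ⊕ E')}
    (hp : p ∈ affFamily A B f) {x₀ : Set E} {s : Set E'} (hx : A.Config x₀)
    (hxX : x₀ ⊆ auxL p)
    (hs : ∀ c ∈ auxR p, B.pol c = true → ∀ d ∈ s, B.le c d → c ∈ f x₀) :
    auxMD B f p x₀ s ∈ affFamily A B f ∧ auxMD B f p x₀ s ⊆ p := by
  obtain ⟨hXc, hYc, hSc⟩ := aux_mem_iff.mp hp
  have hmono : f x₀ ⊆ f (auxL p) := aux_f_mono hf hx hXc hxX
  have hyd : B.Config {c | c ∈ auxR p ∧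
      ∃ d, ((d ∈ f x₀ ∧ B.pol d = false) ∨ d ∈ s) ∧ B.le c d} := by
    refine B.toES.config_subset hYc (fun c hc => hc.1) ?_
    rintro c c' hle ⟨hcY, d, hd, hcd⟩
    exact ⟨hYc.2 hle hcY, d, hd, B.toES.le_trans hle hcd⟩
  constructor
  · refine aux_mem_mk hx hyd ?_ ?_
    · intro b hb hpol
      exact ⟨auxScott_neg hSc b (hmono hb) hpol, b, Or.inl ⟨hb, hpol⟩, B.toES.le_refl b⟩
    · rintro c ⟨hcY, d, hd | hd, hcd⟩ hpol
      · exact (aux_f_config hf hx).2 hcd hd.1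
      · exact hs c hcY hpol d hd hcd
  · exact auxMk_subset hxX (fun c hc => hc.1)

lemma aux_MD_absorb (hf : IsAffineStable A B f) {p : Set (E ⊕ E')}
    (hp : p ∈ affFamily A B f) {e : E ⊕ E'}
    (htop : p = primeConfig (affFamily A B f) e p) {x₀ : Set E} {s : Set E'}
    (hx : A.Config x₀) (hxX : x₀ ⊆ auxL p)
    (hs : ∀ c ∈ auxR p, B.pol c = true → ∀ d ∈ s, B.le c d → c ∈ f x₀)
    (hew : e ∈ auxMD B f p x₀ s) : p ⊆ auxMD B f p x₀ s := by
  obtain ⟨h1, h2⟩ := auxMD_mem hf hp hx hxX hs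
  exact aux_prime_min htop h1 hew h2

lemma aux_tu_left (hf : IsAffineStable A B f) {p : Set (E ⊕ E')}
    (hp : p ∈ affFamily A B f) {a : E} (ha : Sum.inl a ∈ p)
    (htop : p = primeConfig (affFamily A B f) (Sum.inl a) p) :
    auxL p = A.toES.downCl a := by
  obtain ⟨hXc, hYc, hSc⟩ := aux_mem_iff.mp hp
  have haX : a ∈ auxL p := ha
  have hdc : A.Config (A.toES.downCl a) := A.toES.config_downCl hXc haX
  have hdcX : A.toES.downCl a ⊆ auxL p := fun c hc => hXc.2 hc haX
  have hw : auxMk (A.toES.downCl a) (auxR p ∩ f (A.toES.downCl a)) ∈ affFamily A B f := by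
    refine aux_mem_mk hdc (B.toES.config_inter hYc (aux_f_config hf hdc)) ?_ ?_
    · intro b hb hpol
      exact ⟨auxScott_neg hSc b (aux_f_mono hf hdc hXc hdcX hb) hpol, hb⟩
    · exact fun b hb _ => hb.2
  have hsub : auxMk (A.toES.downCl a) (auxR p ∩ f (A.toES.downCl a)) ⊆ p :=
    auxMk_subset hdcX (fun c hc => hc.1)
  have hmem : Sum.inl a ∈ auxMk (A.toES.downCl a) (auxR p ∩ f (A.toES.downCl a)) :=
    inl_mem_auxMk.mpr (A.toES.le_refl a)
  have := aux_prime_min htop hw hmem hsub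
  refine Set.Subset.antisymm ?_ hdcX
  intro c hc
  have := this hc
  rwa [inl_mem_auxMk] at this
  
lemma aux_tu_right_least (hf : IsAffineStable A B f) {p : Set (E ⊕ E')}
    (hp : p ∈ affFamily A B f) {b : E'} (hb : Sum.inr b ∈ p)
    (htop : p = primeConfig (affFamily A B f) (Sum.inr b) p) {x₁ : Set E}
    (hx₁ : A.Config x₁) (hx₁X : x₁ ⊆ auxL p)
    (hsupp : ∀ c ∈ auxR p, B.le c b → B.pol c = true → c ∈ f x₁) :
    auxL p ⊆ x₁ := by
  have hs : ∀ c ∈ auxR p, B.pol c = true → ∀ d ∈ ({b} : Set E'), B.le c d → c ∈ f x₁ := by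
    rintro c hc hpol d rfl hle
    exact hsupp c hc hle hpol
  have habs := aux_MD_absorb hf hp htop hx₁ hx₁X hs
    (inr_mem_auxMD.mpr ⟨hb, b, Or.inr rfl, B.toES.le_refl b⟩)
  intro c hc
  have := habs hc
  rwa [inl_mem_auxMD] at this

lemma aux_tu_lr (hf : IsAffineStable A B f) {p : Set (E ⊕ E')}
    (hp : p ∈ affFamily A B f) {a : E} {b : E'} (ha : Sum.inl a ∈ p)
    (htopa : p = primeConfig (affFamily A B f) (Sum.inl a) p)
    (hb : Sum.inr b ∈ p)
    (htopb : p = primeConfig (affFamily A B f) (Sum.inr b) p) : False := by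
  obtain ⟨hXc, hYc, hSc⟩ := aux_mem_iff.mp hp
  have hXeq := aux_tu_left hf hp ha htopa
  -- b is below a forced negative event of f (auxL p)
  have habs := aux_MD_absorb hf hp htopa hXc subset_rfl
    (s := (∅ : Set E')) (by rintro c hc hpol d hd; exact hd.elim)
    (inl_mem_auxMD.mpr ha)
  have hbd : ∃ d, d ∈ f (auxL p) ∧ B.pol d = false ∧ B.le b d := by
    have := habs hb
    rw [inr_mem_auxMD] at this
    obtain ⟨hbY, d, hd | hd, hle⟩ := this
    · exact ⟨d, hd.1, hd.2, hle⟩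
    · exact hd.elim
  have hamax : ∀ c ∈ auxL p, A.le a c → c = a := by
    intro c hc hac
    rw [hXeq] at hc
    exact A.toES.le_antisymm hc hac
  have hx₁ : A.Config (auxL p \ {a}) := by
    refine A.toES.config_subset hXc Set.diff_subset ?_
    rintro d c hcd ⟨hd, hdne⟩
    refine ⟨hXc.2 hcd hd, ?_⟩
    rintro rfl
    exact hdne (hamax d hd hcd)
  have hx₁X : auxL p \ {a} ⊆ auxL p := Set.diff_subset
  have haa : a ∈ auxL p := ha
  cases hpa : A.pol a with
  | false =>
    have hsn : A.subNeg (auxL p \ {a}) (auxL p) := by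
      refine ⟨Set.diff_subset, fun c hc hcn => ?_⟩
      have : c = a := by
        by_contra hne
        exact hcn ⟨hc, hne⟩
      rwa [this]
    have hf2 := hf.2.1 _ _ hx₁ hXc hsn
    have hsupp : ∀ c ∈ auxR p, B.le c b → B.pol c = true → c ∈ f (auxL p \ {a}) := by
      intro c hc hle hpol
      have hcf : c ∈ f (auxL p) := auxScott_pos hSc c hc hpol
      by_contra hnot
      have := hf2.2 c hcf hnot
      simp [this] at hpol
    have := aux_tu_right_least hf hp hb htopb hx₁ hx₁X hsupp
    exact (this haa).2 rfl
  | true =>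
    have hsp : A.subPos (auxL p \ {a}) (auxL p) := by
      refine ⟨Set.diff_subset, fun c hc hcn => ?_⟩
      have : c = a := by
        by_contra hne
        exact hcn ⟨hc, hne⟩
      rwa [this]
    have hf3 := hf.2.2.1 _ _ hx₁ hXc hsp
    obtain ⟨d, hdf, hdneg, hdle⟩ := hbd
    have hdx₁ : d ∈ f (auxL p \ {a}) := by
      by_contra hnot
      have := hf3.2 d hdf hnot
      simp [this] at hdneg
    have habs2 := aux_MD_absorb hf hp htopb hx₁ hx₁X
      (s := (∅ : Set E')) (by rintro c hc hpol d hd; exact hd.elim)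
      (inr_mem_auxMD.mpr ⟨hb, d, Or.inl ⟨hdx₁, hdneg⟩, hdle⟩)
    have := habs2 ha
    rw [inl_mem_auxMD] at this
    exact this.2 rfl

lemma aux_tu_rr (hf : IsAffineStable A B f) {p : Set (E ⊕ E')}
    (hp : p ∈ affFamily A B f) {b b' : E'} (hb : Sum.inr b ∈ p)
    (htopb : p = primeConfig (affFamily A B f) (Sum.inr b) p)
    (hb' : Sum.inr b' ∈ p)
    (htopb' : p = primeConfig (affFamily A B f) (Sum.inr b') p) : b = b' := by
  classical
  by_contra hne
  obtain ⟨hXc, hYc, hSc⟩ := aux_mem_iff.mp hp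
  -- characterisation of Y from a right top
  have hchar : ∀ t : E', Sum.inr t ∈ p →
      p = primeConfig (affFamily A B f) (Sum.inr t) p →
      ∀ c ∈ auxR p, ∃ d, ((d ∈ f (auxL p) ∧ B.pol d = false) ∨ d = t) ∧ B.le c d := by
    intro t htY htop c hc
    have habs := aux_MD_absorb hf hp htop hXc subset_rfl (s := ({t} : Set E'))
      (by
        rintro c' hc' hpol d rfl hle
        exact auxScott_pos hSc c' hc' hpol)
      (inr_mem_auxMD.mpr ⟨htY, t, Or.inr rfl, B.toES.le_refl t⟩)
    have := habs hc
    rw [inr_mem_auxMD] at this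
    obtain ⟨hcY, d, hd | hd, hle⟩ := this
    · exact ⟨d, Or.inl hd, hle⟩
    · exact ⟨d, Or.inr hd, hle⟩
  have hbY : b ∈ auxR p := hb
  have hb'Y : b' ∈ auxR p := hb'
  -- b is below a forced negative event
  have hbd : ∃ d, d ∈ f (auxL p) ∧ B.pol d = false ∧ B.le b d := by
    obtain ⟨d, hd | hd, hle⟩ := hchar b' hb' htopb' b hbY
    · exact ⟨d, hd.1, hd.2, hle⟩
    · -- b ≤ b'
      have hbb' : B.le b b' := by rw [hd] at hle; exact hle
      obtain ⟨d', hd' | hd', hle'⟩ := hchar b hb htopb b' hb'Y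
      · exact ⟨d', hd'.1, hd'.2, B.toES.le_trans hbb' hle'⟩
      · have hb'b : B.le b' b := by rw [hd'] at hle'; exact hle'
        exact absurd (B.toES.le_antisymm hbb' hb'b) hne
  -- X is finite
  have hXfin : (auxL p).Finite := by
    set P : Set E' := {c | c ∈ auxR p ∧ B.le c b ∧ B.pol c = true} with hP
    have hPfin : P.Finite := (B.toES.finitary b).subset (fun c hc => hc.2.1)
    set supp : E' → Set E := fun c =>
      if h : ∃ x₀, A.Config x₀ ∧ x₀.Finite ∧ x₀ ⊆ auxL p ∧ c ∈ f x₀ then h.choose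
      else ∅ with hsuppdef
    have hsupp : ∀ c ∈ P, A.Config (supp c) ∧ (supp c).Finite ∧
        supp c ⊆ auxL p ∧ c ∈ f (supp c) := by
      intro c hc
      have hex := hf.2.2.2.1 (auxL p) hXc c (auxScott_pos hSc c hc.1 hc.2.2) hc.2.2
      simp only [hsuppdef, dif_pos hex]
      exact hex.choose_spec
    set x₈ : Set E := ⋃ c ∈ P, supp c with hx₈def
    have hx₈X : x₈ ⊆ auxL p := by
      rintro t ht
      simp only [hx₈def, Set.mem_iUnion] at ht
      obtain ⟨c, hc, htc⟩ := ht
      exact (hsupp c hc).2.2.1 htc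
    have hx₈c : A.Config x₈ := by
      refine A.toES.config_subset hXc hx₈X ?_
      intro t t' hle ht
      simp only [hx₈def, Set.mem_iUnion] at ht ⊢
      obtain ⟨c, hc, htc⟩ := ht
      exact ⟨c, hc, ((hsupp c hc).1).2 hle htc⟩
    have hx₈fin : x₈.Finite := by
      refine Set.Finite.biUnion hPfin (fun c hc => (hsupp c hc).2.1)
    have hleast := aux_tu_right_least hf hp hb htopb hx₈c hx₈X ?_
    · exact hx₈fin.subset hleast
    · intro c hc hle hpol
      have hcP : c ∈ P := ⟨hc, hle, hpol⟩
      refine aux_f_mono hf (hsupp c hcP).1 hx₈c ?_ (hsupp c hcP).2.2.2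
      intro t ht
      simp only [hx₈def, Set.mem_iUnion]
      exact ⟨c, hcP, ht⟩
  -- X is nonempty
  rcases Set.eq_empty_or_nonempty (auxL p) with hXemp | hXne
  · obtain ⟨d, hdf, hdneg, _⟩ := hbd
    rw [hXemp] at hdf
    have := aux_f_empty_pos hf d hdf
    simp [this] at hdneg
  obtain ⟨a₁, ha₁, hmax⟩ := A.toES.exists_maximal hXfin hXne
  have hx₁ : A.Config (auxL p \ {a₁}) := by
    refine A.toES.config_subset hXc Set.diff_subset ?_
    rintro d c hcd ⟨hd, hdne⟩
    refine ⟨hXc.2 hcd hd, ?_⟩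
    rintro rfl
    exact hdne (hmax d hd hcd)
  have hx₁X : auxL p \ {a₁} ⊆ auxL p := Set.diff_subset
  cases hpa : A.pol a₁ with
  | false =>
    have hsn : A.subNeg (auxL p \ {a₁}) (auxL p) := by
      refine ⟨Set.diff_subset, fun c hc hcn => ?_⟩
      have : c = a₁ := by
        by_contra hne'
        exact hcn ⟨hc, hne'⟩
      rwa [this]
    have hf2 := hf.2.1 _ _ hx₁ hXc hsn
    have hsupp : ∀ c ∈ auxR p, B.le c b → B.pol c = true → c ∈ f (auxL p \ {a₁}) := by
      intro c hc hle hpol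
      have hcf : c ∈ f (auxL p) := auxScott_pos hSc c hc hpol
      by_contra hnot
      have := hf2.2 c hcf hnot
      simp [this] at hpol
    have := aux_tu_right_least hf hp hb htopb hx₁ hx₁X hsupp
    exact (this ha₁).2 rfl
  | true =>
    have hsp : A.subPos (auxL p \ {a₁}) (auxL p) := by
      refine ⟨Set.diff_subset, fun c hc hcn => ?_⟩
      have : c = a₁ := by
        by_contra hne'
        exact hcn ⟨hc, hne'⟩
      rwa [this]
    have hf3 := hf.2.2.1 _ _ hx₁ hXc hsp
    obtain ⟨d, hdf, hdneg, hdle⟩ := hbd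
    have hdx₁ : d ∈ f (auxL p \ {a₁}) := by
      by_contra hnot
      have := hf3.2 d hdf hnot
      simp [this] at hdneg
    have habs2 := aux_MD_absorb hf hp htopb hx₁ hx₁X
      (s := (∅ : Set E')) (by rintro c hc hpol d hd; exact hd.elim)
      (inr_mem_auxMD.mpr ⟨hb, d, Or.inl ⟨hdx₁, hdneg⟩, hdle⟩)
    have := habs2 ha₁
    rw [inl_mem_auxMD] at this
    exact this.2 rfl

/-- A prime has a unique top event. -/
lemma aux_top_unique (hf : IsAffineStable A B f) {p : Set (E ⊕ E')}
    (hp : p ∈ affFamily A B f) {e e' : E ⊕ E'} (he : e ∈ p)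
    (htop : p = primeConfig (affFamily A B f) e p) (he' : e' ∈ p)
    (htop' : p = primeConfig (affFamily A B f) e' p) : e = e' := by
  cases e with
  | inl a =>
    cases e' with
    | inl a' =>
      have h1 := aux_tu_left hf hp he htop
      have h2 := aux_tu_left hf hp he' htop'
      have ha' : a' ∈ auxL p := he'
      have ha : a ∈ auxL p := he
      rw [h1] at ha'
      rw [h2] at ha
      exact congrArg Sum.inl (A.toES.le_antisymm ha ha')
    | inr b => exact (aux_tu_lr hf hp he htop he' htop').elim
  | inr b =>
    cases e' with
    | inl a => exact (aux_tu_lr hf hp he' htop' he htop).elim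
    | inr b' => exact congrArg Sum.inr (aux_tu_rr hf hp he htop he' htop')

end AuxTop
/-- `max : Pr(F) → A⊥ ∥ B` is a strategy: a locally injective total map of
event structures which is receptive and innocent. -/
theorem stmt11 {E : Type u} {E' : Type v} (A : Game E) (B : Game E')
    (f : Set E → Set E') (hf : IsAffineStable A B f)
    (m : {p : Set (E ⊕ E') // IsPrime (affFamily A B f) p} → E ⊕ E')
    (hm : ∀ p, m p ∈ p.1 ∧ p.1 = primeConfig (affFamily A B f) (m p) p.1) :
    (∀ y, PrConfig (affFamily A B f) y → parConfig A B (m '' y)) ∧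
    (∀ y, PrConfig (affFamily A B f) y →
      ∀ p ∈ y, ∀ q ∈ y, m p = m q → p = q) ∧
    (∀ y, PrConfig (affFamily A B f) y → ∀ z, parConfig A B z → m '' y ⊆ z →
      (∀ e ∈ z, e ∉ m '' y → parPolL A B e = false) →
      ∃! y', PrConfig (affFamily A B f) y' ∧ y ⊆ y' ∧ m '' y' = z) ∧
    (∀ p p', Covers
        (fun p q : {p : Set (E ⊕ E') // IsPrime (affFamily A B f) p} => p.1 ⊆ q.1)
        p p' →
      (parPolL A B (m p) = true ∨ parPolL A B (m p') = false) →
      Covers (parLE A B) (m p) (m p')) := by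
  classical
  -- union of the primes of a configuration is a member of the family
  have hUF : ∀ y, PrConfig (affFamily A B f) y →
      ⋃₀ (Subtype.val '' y) ∈ affFamily A B f := by
    intro y hy
    refine aux_sUnion_mem hf ?_ ?_
    · rintro _ ⟨p, _, rfl⟩; exact aux_prime_memF hf p.2
    · intro W hW hWfin
      have hZfin : ((Subtype.val ⁻¹' W : Set _) ∩ y).Finite :=
        (hWfin.preimage (Set.injOn_of_injective Subtype.val_injective)).inter_of_left _
      have hZsub : (Subtype.val ⁻¹' W : Set _) ∩ y ⊆ y := Set.inter_subset_right
      have hmem := hy.2 _ hZsub hZfin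
      have himg : Subtype.val '' ((Subtype.val ⁻¹' W : Set _) ∩ y) = W := by
        apply Set.Subset.antisymm
        · rintro _ ⟨q, hq, rfl⟩; exact hq.1
        · intro w hw
          obtain ⟨q, hq, rfl⟩ := hW hw
          exact ⟨q, ⟨hw, hq⟩, rfl⟩
      rw [himg] at hmem
      exact ⟨⋃₀ W, hmem, fun w hw => Set.subset_sUnion_of_mem hw⟩
  -- the image of a configuration under `m` is the union of its primes
  have hImg : ∀ y, PrConfig (affFamily A B f) y →
      ⋃₀ (Subtype.val '' y) = m '' y := by
    intro y hy
    apply Set.Subset.antisymm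
    · rintro t ⟨_, ⟨p, hp, rfl⟩, htp⟩
      have hpF := aux_prime_memF hf p.2
      have hq : IsPrime (affFamily A B f) (primeConfig (affFamily A B f) t p.1) :=
        ⟨t, p.1, hpF, htp, rfl⟩
      have hqsub : primeConfig (affFamily A B f) t p.1 ⊆ p.1 :=
        aux_primeConfig_base hpF htp
      have hqy : (⟨_, hq⟩ : {p // IsPrime (affFamily A B f) p}) ∈ y :=
        hy.1 p hp ⟨_, hq⟩ hqsub
      have hqF := aux_prime_memF hf hq
      have hmq : m ⟨_, hq⟩ = t :=
        aux_top_unique hf hqF (hm ⟨_, hq⟩).1 (hm ⟨_, hq⟩).2 aux_mem_primeConfig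
          (aux_primeConfig_idem hf hpF htp).symm
      exact ⟨⟨_, hq⟩, hqy, hmq⟩
    · rintro _ ⟨p, hp, rfl⟩
      exact ⟨p.1, ⟨p, hp, rfl⟩, (hm p).1⟩
  refine ⟨?_, ?_, ?_, ?_⟩
  · -- configurations map to configurations
    intro y hy
    have hU := hUF y hy
    rw [← hImg y hy]
    have h := aux_mem_iff.mp hU
    exact ⟨h.1, h.2.1⟩
  · -- local injectivity
    intro y hy p hp q hq hmpq
    have hw : p.1 ∪ q.1 ∈ affFamily A B f := by
      have hfin : ({p, q} : Set {p // IsPrime (affFamily A B f) p}).Finite :=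
        (Set.finite_singleton q).insert p
      have := hy.2 {p, q} (by rintro r (rfl | rfl) <;> assumption) hfin
      have himg : Subtype.val '' ({p, q} : Set {p // IsPrime (affFamily A B f) p})
          = {p.1, q.1} := by
        rw [Set.image_insert_eq, Set.image_singleton]
      rw [himg, Set.sUnion_pair] at this
      exact this
    have h1 : p.1 = primeConfig (affFamily A B f) (m p) (p.1 ∪ q.1) :=
      aux_top_ext hf hw (aux_prime_memF hf p.2) ⟨(hm p).1, (hm p).2⟩
        Set.subset_union_left
    have h2 : q.1 = primeConfig (affFamily A B f) (m q) (p.1 ∪ q.1) :=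
      aux_top_ext hf hw (aux_prime_memF hf q.2) ⟨(hm q).1, (hm q).2⟩
        Set.subset_union_right
    rw [hmpq] at h1
    exact Subtype.ext (h1.trans h2.symm)
  · -- receptivity
    intro y hy z hz hsub hneg
    have hU := hUF y hy
    have hI := hImg y hy
    have hUz : ⋃₀ (Subtype.val '' y) ⊆ z := by rw [hI]; exact hsub
    obtain ⟨hUX, hUY, hUS⟩ := aux_mem_iff.mp hU
    have hzX : A.Config (auxL z) := hz.1
    have hzY : B.Config (auxR z) := hz.2
    have hsp : A.subPos (auxL (⋃₀ (Subtype.val '' y))) (auxL z) := by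
      refine ⟨auxL_mono hUz, fun a ha han => ?_⟩
      have := hneg (Sum.inl a) ha (by rw [← hI]; exact han)
      simpa [parPolL] using this
    have hfp := hf.2.2.1 _ _ hUX hzX hsp
    have hzF : z ∈ affFamily A B f := by
      refine aux_mem_iff.mpr ⟨hzX, hzY, auxScott_intro ?_ ?_⟩
      · intro b hb hpol
        have hbU : b ∈ f (auxL (⋃₀ (Subtype.val '' y))) := by
          by_contra hnot
          have := hfp.2 b hb hnot
          simp [this] at hpol
        exact auxR_mono hUz (auxScott_neg hUS b hbU hpol)
      · intro b hb hpol
        have hbU : b ∈ auxR (⋃₀ (Subtype.val '' y)) := by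
          by_contra hnot
          have := hneg (Sum.inr b) hb (by rw [← hI]; exact hnot)
          simp [parPolL] at this
          simp [this] at hpol
        exact hfp.1 (auxScott_pos hUS b hbU hpol)
    have hy' : PrConfig (affFamily A B f)
        {p : {p // IsPrime (affFamily A B f) p} | p.1 ⊆ z} := by
      constructor
      · intro p hp q hq
        exact hq.trans hp
      · intro Z hZ _
        refine aux_sUnion_mem hf ?_ ?_
        · rintro _ ⟨p, _, rfl⟩; exact aux_prime_memF hf p.2
        · intro W hW _
          refine ⟨z, hzF, fun w hw => ?_⟩
          obtain ⟨q, hq, rfl⟩ := hW hw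
          exact hZ hq
    have him' : m '' {p : {p // IsPrime (affFamily A B f) p} | p.1 ⊆ z} = z := by
      apply Set.Subset.antisymm
      · rintro _ ⟨p, hp, rfl⟩
        exact hp (hm p).1
      · intro t ht
        have hq : IsPrime (affFamily A B f) (primeConfig (affFamily A B f) t z) :=
          ⟨t, z, hzF, ht, rfl⟩
        have hqz : primeConfig (affFamily A B f) t z ⊆ z := aux_primeConfig_base hzF ht
        have hqF := aux_prime_memF hf hq
        have hmq : m ⟨_, hq⟩ = t :=
          aux_top_unique hf hqF (hm ⟨_, hq⟩).1 (hm ⟨_, hq⟩).2 aux_mem_primeConfig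
            (aux_primeConfig_idem hf hzF ht).symm
        exact ⟨⟨_, hq⟩, hqz, hmq⟩
    have hyy : y ⊆ {p : {p // IsPrime (affFamily A B f) p} | p.1 ⊆ z} := by
      intro p hp
      exact (Set.subset_sUnion_of_mem (Set.mem_image_of_mem Subtype.val hp)).trans hUz
    refine ⟨_, ⟨hy', hyy, him'⟩, ?_⟩
    rintro y₂ ⟨hy₂, _, him₂⟩
    have hU₂ : ⋃₀ (Subtype.val '' y₂) = z := (hImg y₂ hy₂).trans him₂
    ext p
    constructor
    · intro hp
      show p.1 ⊆ z
      rw [← hU₂]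
      exact Set.subset_sUnion_of_mem (Set.mem_image_of_mem Subtype.val hp)
    · intro hp
      have hmp : m p ∈ z := hp (hm p).1
      rw [← him₂] at hmp
      obtain ⟨q, hq, hmq⟩ := hmp
      have hqz : q.1 ⊆ z := by
        rw [← hU₂]; exact Set.subset_sUnion_of_mem (Set.mem_image_of_mem Subtype.val hq)
      have h1 : p.1 = primeConfig (affFamily A B f) (m p) z :=
        aux_top_ext hf hzF (aux_prime_memF hf p.2) ⟨(hm p).1, (hm p).2⟩ hp
      have h2 : q.1 = primeConfig (affFamily A B f) (m q) z :=
        aux_top_ext hf hzF (aux_prime_memF hf q.2) ⟨(hm q).1, (hm q).2⟩ hqz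
      rw [hmq] at h2
      have : p = q := Subtype.ext (h1.trans h2.symm)
      rw [this]; exact hq
  · -- innocence
    intro p p' hcov hpol
    obtain ⟨hne, hsub, hmax⟩ := hcov
    have hp'F : p'.1 ∈ affFamily A B f := aux_prime_memF hf p'.2
    have hpF : p.1 ∈ affFamily A B f := aux_prime_memF hf p.2
    have hpe : p.1 = primeConfig (affFamily A B f) (m p) p'.1 :=
      aux_top_ext hf hp'F hpF ⟨(hm p).1, (hm p).2⟩ hsub
    have hee : m p ≠ m p' := by
      intro h
      apply hne
      apply Subtype.ext
      rw [hpe, h, ← (hm p').2]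
    have hmin : ∀ w, w ∈ affFamily A B f → m p' ∈ w → w ⊆ p'.1 → p'.1 ⊆ w :=
      fun w hw hew hwp => aux_prime_min (hm p').2 hw hew hwp
    have hmemE : m p ∈ p'.1 := hsub (hm p).1
    have hmemE' : m p' ∈ p'.1 := (hm p').1
    have keyA : ∀ c ∈ p'.1, m p ∈ primeConfig (affFamily A B f) c p'.1 →
        c = m p ∨ c = m p' := by
      intro c hc hmc
      have hq : IsPrime (affFamily A B f) (primeConfig (affFamily A B f) c p'.1) :=
        ⟨c, p'.1, hp'F, hc, rfl⟩
      have hqF := aux_prime_memF hf hq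
      have hqsub : primeConfig (affFamily A B f) c p'.1 ⊆ p'.1 :=
        aux_primeConfig_base hp'F hc
      have hpq : p.1 ⊆ primeConfig (affFamily A B f) c p'.1 := by
        rw [hpe]; exact aux_primeConfig_subset hqF hmc hqsub
      rcases hmax ⟨_, hq⟩ hpq hqsub with h | h
      · have hqe : primeConfig (affFamily A B f) c p'.1 = p.1 :=
          congrArg Subtype.val h
        have hc1 : c ∈ p.1 := hqe ▸ (aux_mem_primeConfig
          (F := affFamily A B f) (e := c) (x := p'.1))
        have hc2 : p.1 = primeConfig (affFamily A B f) c p.1 := by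
          rw [← hqe]
          exact (aux_primeConfig_idem hf hp'F hc).symm
        exact Or.inl (aux_top_unique hf hpF hc1 hc2 (hm p).1 (hm p).2)
      · have hqe : primeConfig (affFamily A B f) c p'.1 = p'.1 :=
          congrArg Subtype.val h
        have hc1 : c ∈ p'.1 := hqe ▸ (aux_mem_primeConfig
          (F := affFamily A B f) (e := c) (x := p'.1))
        have hc2 : p'.1 = primeConfig (affFamily A B f) c p'.1 := hqe.symm
        exact Or.inr (aux_top_unique hf hp'F hc1 hc2 (hm p').1 (hm p').2)
    -- the member p' minus its two top events
    have huF : p'.1 \ {m p, m p'} ∈ affFamily A B f := by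
      have hZ : ((fun c => primeConfig (affFamily A B f) c p'.1) ''
          (p'.1 \ {m p, m p'})) ⊆ affFamily A B f := by
        rintro _ ⟨c, hc, rfl⟩
        exact aux_primeConfig_mem hf hp'F hc.1
      have hUZ := aux_sUnion_mem hf hZ (fun W hW _ => by
        refine ⟨p'.1, hp'F, fun w hw => ?_⟩
        obtain ⟨c, hc, rfl⟩ := hW hw
        exact aux_primeConfig_base hp'F hc.1)
      have heq : ⋃₀ ((fun c => primeConfig (affFamily A B f) c p'.1) ''
          (p'.1 \ {m p, m p'})) = p'.1 \ {m p, m p'} := by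
        apply Set.Subset.antisymm
        · rintro t ⟨_, ⟨c, hc, rfl⟩, htc⟩
          refine ⟨aux_primeConfig_base hp'F hc.1 htc, ?_⟩
          rintro (rfl | rfl)
          · rcases keyA c hc.1 htc with h | h
            · exact hc.2 (Or.inl h)
            · exact hc.2 (Or.inr h)
          · have hsub2 := hmin _ (aux_primeConfig_mem hf hp'F hc.1) htc
              (aux_primeConfig_base hp'F hc.1)
            have heq2 : primeConfig (affFamily A B f) c p'.1 = p'.1 :=
              Set.Subset.antisymm (aux_primeConfig_base hp'F hc.1) hsub2
            have : c = m p' := aux_top_unique hf hp'F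
              (heq2 ▸ (aux_mem_primeConfig (F := affFamily A B f) (e := c) (x := p'.1)))
              heq2.symm (hm p').1 (hm p').2
            exact hc.2 (Or.inr this)
        · intro c hc
          exact ⟨_, ⟨c, hc, rfl⟩, aux_mem_primeConfig⟩
      rwa [heq] at hUZ
    obtain ⟨hXc, hYc, hSc⟩ := aux_mem_iff.mp hp'F
    obtain ⟨huX, huY, huS⟩ := aux_mem_iff.mp huF
    -- main dichotomy
    have hLE : parLE A B (m p) (m p') := by
      cases hE : m p with
      | inl a =>
        cases hE' : m p' with
        | inl a' =>
          have haa' : a ≠ a' := fun h => hee (by rw [hE, hE', h])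
          have hle : A.le a a' := by
            by_contra hnle
            rw [hE, hE'] at huX huY huS
            have hLu : auxL (p'.1 \ {Sum.inl a, Sum.inl a'}) = auxL p'.1 \ {a, a'} := by
              ext t; simp [auxL]
            have hRu : auxR (p'.1 \ {Sum.inl a, Sum.inl a'}) = auxR p'.1 := by
              ext t; simp [auxR]
            rw [hLu] at huX huS
            rw [hRu] at huS
            have hXa : A.Config (auxL p'.1 \ {a}) := by
              refine A.toES.config_subset hXc Set.diff_subset ?_
              rintro d c hcd ⟨hd, hdne⟩
              refine ⟨hXc.2 hcd hd, ?_⟩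
              intro hca
              have hca' : c = a := hca
              rw [hca'] at hcd
              rcases eq_or_ne d a' with hda' | hda'
              · rw [hda'] at hcd
                exact hnle hcd
              · have hdu : d ∈ auxL p'.1 \ {a, a'} :=
                  ⟨hd, by rintro (h | h); exacts [hdne h, hda' h]⟩
                exact (huX.2 hcd hdu).2 (Or.inl rfl)
            have hLw : auxL (p'.1 \ {Sum.inl a}) = auxL p'.1 \ {a} := by
              ext t; simp [auxL]
            have hRw : auxR (p'.1 \ {Sum.inl a}) = auxR p'.1 := by
              ext t; simp [auxR]
            have hwF : p'.1 \ {Sum.inl a} ∈ affFamily A B f := by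
              rw [aux_mem_iff, hLw, hRw]
              refine ⟨hXa, hYc, auxScott_intro ?_ ?_⟩
              · intro b hb hpol
                exact auxScott_neg hSc b
                  (aux_f_mono hf hXa hXc Set.diff_subset hb) hpol
              · intro b hb hpol
                have hb2 := auxScott_pos huS b hb hpol
                refine aux_f_mono hf huX hXa ?_ hb2
                rintro t ⟨ht, htn⟩
                exact ⟨ht, fun h => htn (Or.inl h)⟩
            have hmem' : m p' ∈ p'.1 \ {Sum.inl a} := by
              rw [hE']
              refine ⟨by rw [← hE']; exact hmemE', ?_⟩
              simp only [Set.mem_singleton_iff, Sum.inl.injEq]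
              exact fun h => haa' h.symm
            have hcontra := hmin _ hwF hmem' Set.diff_subset hmemE
            rw [hE] at hcontra
            exact hcontra.2 rfl
          exact Sum.LiftRel.inl hle
        | inr b' =>
          exfalso
          rw [hE, hE'] at huX huY huS
          have hLu : auxL (p'.1 \ {Sum.inl a, Sum.inr b'}) = auxL p'.1 \ {a} := by
            ext t; simp [auxL]
          have hRu : auxR (p'.1 \ {Sum.inl a, Sum.inr b'}) = auxR p'.1 \ {b'} := by
            ext t; simp [auxR]
          rw [hLu] at huX huS
          rw [hRu] at huY huS
          have hLw : auxL (p'.1 \ {Sum.inl a}) = auxL p'.1 \ {a} := by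
            ext t; simp [auxL]
          have hRw : auxR (p'.1 \ {Sum.inl a}) = auxR p'.1 := by
            ext t; simp [auxR]
          have hwF : p'.1 \ {Sum.inl a} ∈ affFamily A B f := by
            rw [aux_mem_iff, hLw, hRw]
            refine ⟨huX, hYc, auxScott_intro ?_ ?_⟩
            · intro b hb hpol
              exact auxScott_neg hSc b
                (aux_f_mono hf huX hXc Set.diff_subset hb) hpol
            · intro b₁ hb₁ hb₁pol
              rcases eq_or_ne b₁ b' with hb₁b' | hb₁b'
              · rcases hpol with hp1 | hp2
                · rw [hE] at hp1
                  simp only [parPolL] at hp1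
                  have hpa : A.pol a = false := by simpa using hp1
                  have hsn : A.subNeg (auxL p'.1 \ {a}) (auxL p'.1) := by
                    refine ⟨Set.diff_subset, fun c hc hcn => ?_⟩
                    have : c = a := by
                      by_contra hne'
                      exact hcn ⟨hc, hne'⟩
                    rwa [this]
                  have hf2 := hf.2.1 _ _ huX hXc hsn
                  have hbfX : b₁ ∈ f (auxL p'.1) := auxScott_pos hSc b₁ hb₁ hb₁pol
                  by_contra hnot
                  have := hf2.2 b₁ hbfX hnot
                  simp [this] at hb₁pol
                · rw [hE'] at hp2
                  simp only [parPolL] at hp2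
                  rw [hb₁b'] at hb₁pol
                  simp [hp2] at hb₁pol
              · exact auxScott_pos huS b₁ ⟨hb₁, hb₁b'⟩ hb₁pol
          have hmem' : m p' ∈ p'.1 \ {Sum.inl a} := by
            rw [hE']
            exact ⟨by rw [← hE']; exact hmemE', by simp⟩
          have hcontra := hmin _ hwF hmem' Set.diff_subset hmemE
          rw [hE] at hcontra
          exact hcontra.2 rfl
      | inr b =>
        cases hE' : m p' with
        | inl a' =>
          exfalso
          rw [hE, hE'] at huX huY huS
          have hLu : auxL (p'.1 \ {Sum.inr b, Sum.inl a'}) = auxL p'.1 \ {a'} := by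
            ext t; simp [auxL]
          have hRu : auxR (p'.1 \ {Sum.inr b, Sum.inl a'}) = auxR p'.1 \ {b} := by
            ext t; simp [auxR]
          rw [hLu] at huX huS
          rw [hRu] at huY huS
          have hLw : auxL (p'.1 \ {Sum.inr b}) = auxL p'.1 := by
            ext t; simp [auxL]
          have hRw : auxR (p'.1 \ {Sum.inr b}) = auxR p'.1 \ {b} := by
            ext t; simp [auxR]
          have hwF : p'.1 \ {Sum.inr b} ∈ affFamily A B f := by
            rw [aux_mem_iff, hLw, hRw]
            refine ⟨hXc, huY, auxScott_intro ?_ ?_⟩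
            · intro d hd hdpol
              have hdY : d ∈ auxR p'.1 := auxScott_neg hSc d hd hdpol
              rcases eq_or_ne d b with hdb | hdb
              · exfalso
                rcases hpol with hp1 | hp2
                · rw [hE] at hp1
                  simp only [parPolL] at hp1
                  rw [hdb] at hdpol
                  simp [hp1] at hdpol
                · rw [hE'] at hp2
                  simp only [parPolL] at hp2
                  have hpa' : A.pol a' = true := by simpa using hp2
                  have hspA : A.subPos (auxL p'.1 \ {a'}) (auxL p'.1) := by
                    refine ⟨Set.diff_subset, fun c hc hcn => ?_⟩
                    have : c = a' := by
                      by_contra hne'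
                      exact hcn ⟨hc, hne'⟩
                    rwa [this]
                  have hf3 := hf.2.2.1 _ _ huX hXc hspA
                  have hdx : d ∈ f (auxL p'.1 \ {a'}) := by
                    by_contra hnot
                    have := hf3.2 d hd hnot
                    simp [this] at hdpol
                  have hmem2 := auxScott_neg huS d hdx hdpol
                  exact hmem2.2 hdb
              · exact ⟨hdY, hdb⟩
            · intro c hc hpol
              exact auxScott_pos hSc c hc.1 hpol
          have hmem' : m p' ∈ p'.1 \ {Sum.inr b} := by
            rw [hE']
            exact ⟨by rw [← hE']; exact hmemE', by simp⟩
          have hcontra := hmin _ hwF hmem' Set.diff_subset hmemE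
          rw [hE] at hcontra
          exact hcontra.2 rfl
        | inr b' =>
          have hbb' : b ≠ b' := fun h => hee (by rw [hE, hE', h])
          have hle : B.le b b' := by
            by_contra hnle
            rw [hE, hE'] at huX huY huS
            have hLu : auxL (p'.1 \ {Sum.inr b, Sum.inr b'}) = auxL p'.1 := by
              ext t; simp [auxL]
            have hRu : auxR (p'.1 \ {Sum.inr b, Sum.inr b'}) = auxR p'.1 \ {b, b'} := by
              ext t; simp [auxR]
            rw [hLu] at huX huS
            rw [hRu] at huY huS
            have hYb : B.Config (auxR p'.1 \ {b}) := by
              refine B.toES.config_subset hYc Set.diff_subset ?_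
              rintro d c hcd ⟨hd, hdne⟩
              refine ⟨hYc.2 hcd hd, ?_⟩
              intro hcb
              have hcb' : c = b := hcb
              rw [hcb'] at hcd
              rcases eq_or_ne d b' with hdb' | hdb'
              · rw [hdb'] at hcd
                exact hnle hcd
              · have hdu : d ∈ auxR p'.1 \ {b, b'} :=
                  ⟨hd, by rintro (h | h); exacts [hdne h, hdb' h]⟩
                exact (huY.2 hcd hdu).2 (Or.inl rfl)
            have hLw : auxL (p'.1 \ {Sum.inr b}) = auxL p'.1 := by
              ext t; simp [auxL]
            have hRw : auxR (p'.1 \ {Sum.inr b}) = auxR p'.1 \ {b} := by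
              ext t; simp [auxR]
            have hwF : p'.1 \ {Sum.inr b} ∈ affFamily A B f := by
              rw [aux_mem_iff, hLw, hRw]
              refine ⟨hXc, hYb, auxScott_intro ?_ ?_⟩
              · intro d hd hpol
                have := auxScott_neg huS d hd hpol
                exact ⟨this.1, fun h => this.2 (Or.inl h)⟩
              · intro c hc hpol
                exact auxScott_pos hSc c hc.1 hpol
            have hmem' : m p' ∈ p'.1 \ {Sum.inr b} := by
              rw [hE']
              refine ⟨by rw [← hE']; exact hmemE', ?_⟩
              simp only [Set.mem_singleton_iff, Sum.inr.injEq]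
              exact fun h => hbb' h.symm
            have hcontra := hmin _ hwF hmem' Set.diff_subset hmemE
            rw [hE] at hcontra
            exact hcontra.2 rfl
          exact Sum.LiftRel.inr hle
    refine ⟨hee, hLE, ?_⟩
    intro c hc1 hc2
    cases hE : m p with
    | inl a =>
      cases hE' : m p' with
      | inl a' =>
        rw [hE] at hc1
        cases hc1 with
        | inl h1 =>
          rename_i a''
          rw [hE'] at hc2
          cases hc2 with
          | inl h2 =>
            have hcp : Sum.inl a'' ∈ p'.1 :=
              hXc.2 h2 (show Sum.inl a' ∈ p'.1 by rw [← hE']; exact hmemE')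
            have hin : m p ∈ primeConfig (affFamily A B f) (Sum.inl a'') p'.1 := by
              refine Set.mem_sInter.mpr ?_
              rintro w ⟨hw1, hw2, _⟩
              have := (aux_mem_iff.mp hw1).1.2 h1 hw2
              rw [hE]
              exact this
            rw [← hE, ← hE']
            exact keyA _ hcp hin
      | inr b' =>
        rw [hE, hE'] at hLE
        cases hLE
    | inr b =>
      cases hE' : m p' with
      | inl a' =>
        rw [hE, hE'] at hLE
        cases hLE
      | inr b' =>
        rw [hE] at hc1
        cases hc1 with
        | inr h1 =>
          rename_i b''
          rw [hE'] at hc2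
          cases hc2 with
          | inr h2 =>
            have hcp : Sum.inr b'' ∈ p'.1 :=
              hYc.2 h2 (show Sum.inr b' ∈ p'.1 by rw [← hE']; exact hmemE')
            have hin : m p ∈ primeConfig (affFamily A B f) (Sum.inr b'') p'.1 := by
              refine Set.mem_sInter.mpr ?_
              rintro w ⟨hw1, hw2, _⟩
              have := (aux_mem_iff.mp hw1).2.1.2 h1 hw2
              rw [hE]
              exact this
            rw [← hE, ← hE']
            exact keyA _ hcp hin
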